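/- Key counting inequality for the symmetric price of anarchy bound: let C be an equilibrium with an empty node v adjacent to x_T agents of each type T, with x = Σ_T x_T ≥ 2. Then every agent of type T adjacent to v has utility at least (x − x_T)/(x − 1) and every agent of type T not adjacent to v has utility at least (x − x_T)/x, and consequently SW(C) ≥ n − (1/x) Σ_T n_T x_T, where n_T is the number of agents of type T. -/

import Mathlib

open Finset

variable {V τ : Type}

open Classical in
noncomputable def occNbrs [Fintype V] (G : SimpleGraph V) (C : V → Option τ) (v : V) :
    Finset V :=
  Finset.univ.filter (fun u => G.Adj v u ∧ (C u).isSome)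

open Classical in
noncomputable def diffNbrs [Fintype V] (G : SimpleGraph V) (C : V → Option τ) (v : V)
    (t : τ) : Finset V :=
  Finset.univ.filter (fun u => G.Adj v u ∧ ∃ s, C u = some s ∧ s ≠ t)

/-- Utility of the agent at node `v`: fraction of occupied neighbors of different type. -/
noncomputable def util [Fintype V] (G : SimpleGraph V) (C : V → Option τ) (v : V) : ℚ :=
  match C v with
  | none => 0
  | some t =>
      if (occNbrs G C v).card = 0 then 0
      else ((diffNbrs G C v t).card : ℚ) / ((occNbrs G C v).card : ℚ)

/-- The assignment after the agent at `u` jumps to node `w`. -/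
def move [DecidableEq V] (C : V → Option τ) (u w : V) : V → Option τ :=
  fun x => if x = w then C u else if x = u then none else C x

/-- An improving move: the agent at `u` jumps to the empty node `w`, strictly increasing
its utility. -/
def Improves [Fintype V] [DecidableEq V] (G : SimpleGraph V) (C : V → Option τ)
    (u w : V) : Prop :=
  (C u).isSome ∧ C w = none ∧ util G C u < util G (move C u w) w

/-- Pure Nash equilibrium: no agent can strictly improve by jumping to an empty node. -/
def IsEquil [Fintype V] [DecidableEq V] (G : SimpleGraph V) (C : V → Option τ) : Prop :=
  ∀ u w : V, (C u).isSome → C w = none → util G (move C u w) w ≤ util G C u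

/-- Social welfare: sum of agents' utilities. -/
noncomputable def SW [Fintype V] (G : SimpleGraph V) (C : V → Option τ) : ℚ :=
  ∑ v, util G C v

open Classical in
noncomputable def pw (C : V → Option τ) (m : ℚ) (u v : V) : ℚ :=
  if (C u).isNone ∨ (C v).isNone then m
  else if C u = C v then 1 else 0

open Classical in
/-- The potential function: sum over edges, weight 1 for same-type endpoints,
`m` if an endpoint is unoccupied, 0 for different-type endpoints. -/
noncomputable def potential [Fintype V] (G : SimpleGraph V) (C : V → Option τ)
    (m : ℚ) : ℚ :=
  (∑ p : V × V, if G.Adj p.1 p.2 then pw C m p.1 p.2 else 0) / 2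

open Classical in
noncomputable def countType [Fintype V] (C : V → Option τ) (t : τ) : ℕ :=
  (Finset.univ.filter (fun v => C v = some t)).card

open Classical in
noncomputable def emptyCount [Fintype V] (C : V → Option τ) : ℕ :=
  (Finset.univ.filter (fun v => C v = none)).card


open Classical in
lemma util_nonneg' [Fintype V] (G : SimpleGraph V) (C : V → Option τ) (u : V) :
    0 ≤ util G C u := by
  unfold util
  cases h : C u with
  | none => simp
  | some t =>
    simp only
    split
    · exact le_refl 0
    · positivity

open Classical in
/-- counting inequality at an equilibrium with an empty node `v` having
`x_T` neighbors of each type `T` and `x = Σ_T x_T ≥ 2`. -/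
theorem stmt7 {V τ : Type} [Fintype V] [DecidableEq V] [Fintype τ]
    (G : SimpleGraph V) (C : V → Option τ) (heq : IsEquil G C)
    (v : V) (hv : C v = none)
    (xT : τ → ℕ)
    (hxT : ∀ t, xT t = (Finset.univ.filter (fun u => G.Adj v u ∧ C u = some t)).card)
    (x : ℕ) (hx : x = ∑ t, xT t) (hx2 : 2 ≤ x)
    (nT : τ → ℕ) (hnT : ∀ t, nT t = countType C t)
    (n : ℕ) (hn : n = ∑ t, nT t) :
    (∀ u t, C u = some t → G.Adj v u →
        ((x : ℚ) - (xT t : ℚ)) / ((x : ℚ) - 1) ≤ util G C u) ∧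
    (∀ u t, C u = some t → ¬ G.Adj v u →
        ((x : ℚ) - (xT t : ℚ)) / (x : ℚ) ≤ util G C u) ∧
    (n : ℚ) - (1 / (x : ℚ)) * ∑ t, (nT t : ℚ) * (xT t : ℚ) ≤ SW G C := by
  classical
  -- basic facts
  have hxt_le : ∀ t, xT t ≤ (occNbrs G C v).card := by
    intro t
    rw [hxT t]
    apply Finset.card_le_card
    intro u hu
    simp only [occNbrs, Finset.mem_filter, Finset.mem_univ, true_and] at hu ⊢
    exact ⟨hu.1, by rw [hu.2]; rfl⟩
  have hocc_card : (occNbrs G C v).card = x := by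
    rw [hx]
    unfold occNbrs
    rw [Finset.card_filter]
    have : ∀ t, xT t = ∑ u : V, if G.Adj v u ∧ C u = some t then 1 else 0 := by
      intro t; rw [hxT t, Finset.card_filter]
    simp_rw [this]
    rw [Finset.sum_comm]
    apply Finset.sum_congr rfl
    intro u _
    cases h : C u with
    | none => simp [h]
    | some s =>
      by_cases ha : G.Adj v u
      · simp only [ha, h, true_and, Option.isSome_some, if_true, Option.some.injEq]
        rw [Finset.sum_eq_single s] <;> simp +contextual [eq_comm]
      · simp [ha]
  have hxTx : ∀ t, xT t ≤ x := fun t => hocc_card ▸ hxt_le t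
  have hdiff_card : ∀ t, (diffNbrs G C v t).card = x - xT t := by
    intro t
    have hsub : (Finset.univ.filter (fun u => G.Adj v u ∧ C u = some t)) ⊆ occNbrs G C v := by
      intro u hu
      simp only [occNbrs, Finset.mem_filter, Finset.mem_univ, true_and] at hu ⊢
      exact ⟨hu.1, by rw [hu.2]; rfl⟩
    have hset : diffNbrs G C v t =
        occNbrs G C v \ (Finset.univ.filter (fun u => G.Adj v u ∧ C u = some t)) := by
      ext u
      simp only [diffNbrs, occNbrs, Finset.mem_sdiff, Finset.mem_filter, Finset.mem_univ,
        true_and]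
      cases h : C u with
      | none => simp [h]
      | some s =>
        constructor
        · rintro ⟨ha, s', hs', hne⟩
          injection hs' with h'
          subst h'
          exact ⟨⟨ha, rfl⟩, fun hc => hne (Option.some.inj hc.2)⟩
        · rintro ⟨⟨ha, _⟩, hnc⟩
          refine ⟨ha, s, rfl, fun hst => hnc ⟨ha, by rw [hst]⟩⟩
    rw [hset, Finset.card_sdiff_of_subset hsub, hocc_card, ← hxT t]
  -- the key move computation
  have key : ∀ u t, C u = some t →
      util G (move C u v) v =
        if G.Adj v u then ((x : ℚ) - (xT t : ℚ)) / ((x : ℚ) - 1)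
        else ((x : ℚ) - (xT t : ℚ)) / (x : ℚ) := by
    intro u t hu
    have huv : u ≠ v := fun h => by rw [h, hv] at hu; cases hu
    have hCv' : move C u v v = some t := by simp [move, hu]
    have hocc' : occNbrs G (move C u v) v = (occNbrs G C v).erase u := by
      ext w
      simp only [occNbrs, Finset.mem_filter, Finset.mem_univ, true_and, Finset.mem_erase]
      constructor
      · rintro ⟨ha, hs⟩
        have hwv : w ≠ v := fun h => G.irrefl (h ▸ ha)
        by_cases hwu : w = u
        · exfalso; rw [move] at hs; simp [hwv, hwu, huv] at hs
        · rw [move] at hs; simp only [hwv, hwu, if_false] at hs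
          exact ⟨hwu, ha, hs⟩
      · rintro ⟨hwu, ha, hs⟩
        have hwv : w ≠ v := fun h => G.irrefl (h ▸ ha)
        refine ⟨ha, ?_⟩
        rw [move]; simp only [hwv, hwu, if_false]; exact hs
    have hdiff' : diffNbrs G (move C u v) v t = diffNbrs G C v t := by
      ext w
      simp only [diffNbrs, Finset.mem_filter, Finset.mem_univ, true_and]
      constructor
      · rintro ⟨ha, s, hs, hst⟩
        have hwv : w ≠ v := fun h => G.irrefl (h ▸ ha)
        by_cases hwu : w = u
        · exfalso; rw [move] at hs; simp [hwv, hwu, huv] at hs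
        · rw [move] at hs; simp only [hwv, hwu, if_false] at hs
          exact ⟨ha, s, hs, hst⟩
      · rintro ⟨ha, s, hs, hst⟩
        have hwv : w ≠ v := fun h => G.irrefl (h ▸ ha)
        have hwu : w ≠ u := by
          rintro rfl; rw [hu] at hs; injection hs with h'; exact hst h'.symm
        refine ⟨ha, s, ?_, hst⟩
        rw [move]; simp only [hwv, hwu, if_false]; exact hs
    have hdc : ((diffNbrs G (move C u v) v t).card : ℚ) = (x : ℚ) - (xT t : ℚ) := by
      rw [hdiff', hdiff_card t, Nat.cast_sub (hxTx t)]
    by_cases ha : G.Adj v u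
    · have humem : u ∈ occNbrs G C v := by
        simp only [occNbrs, Finset.mem_filter, Finset.mem_univ, true_and]
        exact ⟨ha, by rw [hu]; rfl⟩
      have hcard : (occNbrs G (move C u v) v).card = x - 1 := by
        rw [hocc', Finset.card_erase_of_mem humem, hocc_card]
      have hne : x - 1 ≠ 0 := by omega
      rw [util, hCv']
      simp only [hcard, hne, if_false, if_neg hne, ha, if_true]
      rw [hdc, Nat.cast_sub (by omega : 1 ≤ x)]
      norm_num
    · have humem : u ∉ occNbrs G C v := by
        simp only [occNbrs, Finset.mem_filter, Finset.mem_univ, true_and]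
        tauto
      have hcard : (occNbrs G (move C u v) v).card = x := by
        rw [hocc', Finset.erase_eq_of_notMem humem, hocc_card]
      have hne : x ≠ 0 := by omega
      rw [util, hCv']
      simp only [hcard, hne, if_false, if_neg hne, ha]
      rw [hdc]
  have part1 : ∀ u t, C u = some t → G.Adj v u →
      ((x : ℚ) - (xT t : ℚ)) / ((x : ℚ) - 1) ≤ util G C u := by
    intro u t hu ha
    have := heq u v (by rw [hu]; rfl) hv
    rwa [key u t hu, if_pos ha] at this
  have part2 : ∀ u t, C u = some t → ¬ G.Adj v u →
      ((x : ℚ) - (xT t : ℚ)) / (x : ℚ) ≤ util G C u := by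
    intro u t hu ha
    have := heq u v (by rw [hu]; rfl) hv
    rwa [key u t hu, if_neg ha] at this
  refine ⟨part1, part2, ?_⟩
  -- every occupied node has util ≥ (x - xT t)/x
  have hxQ : (0:ℚ) < (x:ℚ) := by exact_mod_cast (by omega : 0 < x)
  have bound : ∀ u t, C u = some t → ((x : ℚ) - (xT t : ℚ)) / (x : ℚ) ≤ util G C u := by
    intro u t hu
    by_cases ha : G.Adj v u
    · refine le_trans ?_ (part1 u t hu ha)
      have hnum : (0:ℚ) ≤ (x:ℚ) - (xT t : ℚ) := by
        have := hxTx t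
        have : (xT t : ℚ) ≤ (x : ℚ) := by exact_mod_cast this
        linarith
      have hden : (0:ℚ) < (x:ℚ) - 1 := by
        have : (2:ℚ) ≤ (x:ℚ) := by exact_mod_cast hx2
        linarith
      gcongr
      linarith
    · exact part2 u t hu ha
  have hxne : ((x:ℚ)) ≠ 0 := by
    have : (0:ℚ) < (x:ℚ) := by exact_mod_cast (by omega : 0 < x)
    exact ne_of_gt this
  have hSW : ∑ u : V, (match C u with | none => (0:ℚ) | some t => ((x:ℚ) - (xT t:ℚ))/(x:ℚ)) ≤ SW G C := by
    unfold SW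
    apply Finset.sum_le_sum
    intro u _
    cases h : C u with
    | none =>
      simp only [h]
      exact util_nonneg' G C u
    | some t =>
      simp only [h]
      exact bound u t h
  have hLHS : ∑ u : V, (match C u with | none => (0:ℚ) | some t => ((x:ℚ) - (xT t:ℚ))/(x:ℚ))
      = ∑ t, (nT t : ℚ) * (((x:ℚ) - (xT t:ℚ))/(x:ℚ)) := by
    have hpt : ∀ u : V, (match C u with | none => (0:ℚ) | some t => ((x:ℚ) - (xT t:ℚ))/(x:ℚ))
        = ∑ t, if C u = some t then ((x:ℚ) - (xT t:ℚ))/(x:ℚ) else 0 := by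
      intro u
      cases h : C u with
      | none => simp [h]
      | some s =>
        simp only [h, Option.some.injEq]
        rw [Finset.sum_ite_eq univ s (fun t => ((x:ℚ) - (xT t:ℚ))/(x:ℚ))]
        simp
    simp_rw [hpt]
    rw [Finset.sum_comm]
    apply Finset.sum_congr rfl
    intro t _
    rw [← Finset.sum_filter, Finset.sum_const, nsmul_eq_mul]
    congr 2
    rw [hnT t, countType]
  have hnQ : (n:ℚ) = ∑ t, (nT t : ℚ) := by rw [hn]; push_cast; rfl
  calc (n : ℚ) - (1 / (x : ℚ)) * ∑ t, (nT t : ℚ) * (xT t : ℚ)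
      = ∑ t, ((nT t:ℚ) - (1/(x:ℚ)) * ((nT t:ℚ) * (xT t:ℚ))) := by
        rw [Finset.sum_sub_distrib, ← Finset.mul_sum, hnQ]
    _ = ∑ t, (nT t : ℚ) * (((x:ℚ) - (xT t:ℚ))/(x:ℚ)) := by
        apply Finset.sum_congr rfl
        intro t _
        field_simp
    _ ≤ SW G C := by rw [← hLHS]; exact hSW
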